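/- Let A be an n×n complex matrix of index k and let m ≥ 1 be an integer. Then an n×n complex matrix X satisfies the system XAX = X, AX = (A⊕)^m A^m P_{A^m}, and XA = (A⊕)^{m+1} A^m P_{A^m} A if and only if X = A^{#_m}; in particular this system is consistent and has a unique solution. -/
import Mathlib


open Matrix

/-- `X` is the Moore–Penrose inverse of `A` (four Penrose equations). -/
def MoorePenroseOf {n : ℕ} (A X : Matrix (Fin n) (Fin n) ℂ) : Prop :=
  A * X * A = A ∧ X * A * X = X ∧ (A * X)ᴴ = A * X ∧ (X * A)ᴴ = X * A

/-- Column space of a square complex matrix. -/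
noncomputable def colSpace {n : ℕ} (A : Matrix (Fin n) (Fin n) ℂ) : Submodule ℂ (Fin n → ℂ) :=
  LinearMap.range A.mulVecLin

/-- Null space of a square complex matrix. -/
noncomputable def nullSpace {n : ℕ} (A : Matrix (Fin n) (Fin n) ℂ) : Submodule ℂ (Fin n → ℂ) :=
  LinearMap.ker A.mulVecLin

/-- `k` is the index of `A`: the smallest nonnegative integer with
`rank(A^k) = rank(A^(k+1))`. -/
def HasIndex {n : ℕ} (A : Matrix (Fin n) (Fin n) ℂ) (k : ℕ) : Prop :=
  (A ^ k).rank = (A ^ (k + 1)).rank ∧ ∀ j < k, (A ^ j).rank ≠ (A ^ (j + 1)).rank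

/-- `X` is the core-EP inverse of `A` (where `k = Ind(A)`): `XAX = X` and
`R(X) = R(Xᴴ) = R(A^k)`. -/
def IsCoreEP {n : ℕ} (A X : Matrix (Fin n) (Fin n) ℂ) (k : ℕ) : Prop :=
  X * A * X = X ∧ colSpace X = colSpace (A ^ k) ∧ colSpace Xᴴ = colSpace (A ^ k)

section Aux

variable {n : ℕ}

lemma matrix_eq_of_mulVecLin {M N : Matrix (Fin n) (Fin n) ℂ}
    (h : M.mulVecLin = N.mulVecLin) : M = N := by
  apply Matrix.toLin'.injective
  rwa [Matrix.toLin'_apply', Matrix.toLin'_apply']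

lemma colSpace_mul (M N : Matrix (Fin n) (Fin n) ℂ) :
    colSpace (M * N) = Submodule.map M.mulVecLin (colSpace N) := by
  unfold colSpace
  rw [Matrix.mulVecLin_mul, LinearMap.range_comp]

lemma colSpace_mul_le (M N : Matrix (Fin n) (Fin n) ℂ) :
    colSpace (M * N) ≤ colSpace M := by
  unfold colSpace
  rw [Matrix.mulVecLin_mul]
  exact LinearMap.range_comp_le_range _ _

/-- An idempotent acts as identity on matrices whose column space lies in its range. -/
lemma idem_absorb {Q M : Matrix (Fin n) (Fin n) ℂ} (hQ : Q * Q = Q)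
    (h : colSpace M ≤ colSpace Q) :
    Q * M = M := by
  apply matrix_eq_of_mulVecLin
  refine LinearMap.ext fun x => ?_
  have hx : M.mulVecLin x ∈ LinearMap.range Q.mulVecLin :=
    h (LinearMap.mem_range_self _ x)
  obtain ⟨y, hy⟩ := hx
  have hQy : (Q * Q).mulVecLin y = Q.mulVecLin y := by rw [hQ]
  simp only [Matrix.mulVecLin_mul, LinearMap.comp_apply] at hQy ⊢
  rw [← hy, hQy]

end Aux

/-- the system `XAX = X`, `AX = (A⊕)^m A^m P_{A^m}`,
`XA = (A⊕)^{m+1} A^m P_{A^m} A` has `A^{#_m}` as its unique solution. -/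
theorem stmt_12 {n k m : ℕ} (hm : 1 ≤ m)
    (A CEP AmDag : Matrix (Fin n) (Fin n) ℂ)
    (hInd : HasIndex A k)
    (hCEP : IsCoreEP A CEP k)
    (hMP : MoorePenroseOf (A ^ m) AmDag) :
    ∀ X : Matrix (Fin n) (Fin n) ℂ,
      (X * A * X = X ∧
       A * X = CEP ^ m * A ^ m * (A ^ m * AmDag) ∧
       X * A = CEP ^ (m + 1) * A ^ m * (A ^ m * AmDag) * A) ↔
      X = CEP ^ (m + 1) * A ^ m * (A ^ m * AmDag) := by
  obtain ⟨h0, hcR, -⟩ := hCEP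
  obtain ⟨hmp1, -, -, -⟩ := hMP
  set C := CEP with hC
  set P : Matrix (Fin n) (Fin n) ℂ := A ^ m * AmDag with hP
  -- column space inclusions and stabilization
  have hle : ∀ j : ℕ, colSpace (A ^ (j+1)) ≤ colSpace (A ^ j) := by
    intro j
    rw [pow_succ]
    exact colSpace_mul_le _ _
  have hmono : ∀ a d : ℕ, colSpace (A ^ (a + d)) ≤ colSpace (A ^ a) := by
    intro a d
    induction d with
    | zero => exact le_rfl
    | succ i ih =>
        refine le_trans ?_ ih
        rw [show a + (i+1) = (a+i) + 1 by ring]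
        exact hle (a + i)
  have hEq1 : colSpace (A ^ (k+1)) = colSpace (A ^ k) := by
    refine Submodule.eq_of_le_of_finrank_eq (hle k) ?_
    exact (hInd.1).symm
  have hstab : ∀ j : ℕ, colSpace (A ^ (k + j)) = colSpace (A ^ k) := by
    intro j
    induction j with
    | zero => rfl
    | succ i ih =>
        have e1 : colSpace (A ^ (k + i + 1))
            = Submodule.map A.mulVecLin (colSpace (A ^ (k+i))) := by
          rw [pow_succ']
          exact colSpace_mul _ _
        have e2 : colSpace (A ^ (k + 1)) = Submodule.map A.mulVecLin (colSpace (A ^ k)) := by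
          rw [pow_succ']
          exact colSpace_mul _ _
        rw [show k + (i+1) = k + i + 1 by ring, e1, ih, ← e2, hEq1]
  have hkm : colSpace (A ^ k) ≤ colSpace (A ^ m) := by
    rcases le_total m k with h | h
    · obtain ⟨d, hd⟩ := Nat.exists_eq_add_of_le h
      rw [hd]
      exact hmono m d
    · obtain ⟨d, hd⟩ := Nat.exists_eq_add_of_le h
      rw [hd, hstab d]
  -- Q := A * C is idempotent with range = colSpace (A^k)
  have hQidem : (A * C) * (A * C) = A * C := by
    calc (A * C) * (A * C) = A * (C * A * C) := by noncomm_ring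
    _ = A * C := by rw [h0]
  have hQrange : colSpace (A * C) = colSpace (A ^ k) := by
    have e1 : colSpace (A * C) = Submodule.map A.mulVecLin (colSpace C) := colSpace_mul _ _
    have e2 : colSpace (A ^ (k+1)) = Submodule.map A.mulVecLin (colSpace (A ^ k)) := by
      rw [pow_succ']; exact colSpace_mul _ _
    rw [e1, hcR, ← e2, hEq1]
  -- key identity 1 : A * C * C = C
  have h1 : A * C * C = C :=
    idem_absorb hQidem (by rw [hQrange, ← hcR])
  -- P is idempotent with colSpace C ≤ colSpace P
  have hPidem : P * P = P := by
    rw [hP]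
    calc A ^ m * AmDag * (A ^ m * AmDag) = (A ^ m * AmDag * A ^ m) * AmDag := by noncomm_ring
    _ = A ^ m * AmDag := by rw [hmp1]
  have hCleP : colSpace C ≤ colSpace P := by
    rw [hcR]
    refine le_trans hkm ?_
    have e : A ^ m = P * A ^ m := by rw [hP, hmp1]
    calc colSpace (A ^ m) = colSpace (P * A ^ m) := by rw [← e]
    _ ≤ colSpace P := colSpace_mul_le _ _
  -- key identity 2 : P * C = C
  have h2 : P * C = C := idem_absorb hPidem hCleP
  -- derived: A * C^(i+2) = C^(i+1)
  have hA : ∀ i : ℕ, A * C ^ (i + 2) = C ^ (i + 1) := by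
    intro i
    calc A * C ^ (i + 2) = (A * C * C) * C ^ i := by rw [pow_succ', pow_succ']; noncomm_ring
    _ = C * C ^ i := by rw [h1]
    _ = C ^ (i + 1) := (pow_succ' C i).symm
  -- derived: A^(j+1) * C^(j+1) = A * C
  have hAC : ∀ j : ℕ, A ^ (j + 1) * C ^ (j + 1) = A * C := by
    intro j
    induction j with
    | zero => simp
    | succ i ih =>
        calc A ^ (i + 2) * C ^ (i + 2) = A ^ (i + 1) * (A * C ^ (i + 2)) := by
              rw [pow_succ A (i+1)]; noncomm_ring
        _ = A ^ (i + 1) * C ^ (i + 1) := by rw [hA i]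
        _ = A * C := ih
  -- derived: P * C^(j+1) = C^(j+1)
  have hPC : ∀ j : ℕ, P * C ^ (j + 1) = C ^ (j + 1) := by
    intro j
    rw [pow_succ', ← mul_assoc, h2]
  obtain ⟨m', rfl⟩ : ∃ m', m = m' + 1 := ⟨m - 1, by omega⟩
  -- right-associated rewriting lemmas
  have e1 : ∀ Z : Matrix (Fin n) (Fin n) ℂ,
      A * (C ^ (m' + 1 + 1) * Z) = C ^ (m' + 1) * Z := by
    intro Z
    calc A * (C ^ (m' + 1 + 1) * Z) = (A * C ^ (m' + 1 + 1)) * Z := (mul_assoc _ _ _).symm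
    _ = C ^ (m' + 1) * Z := by
          rw [show A * C ^ (m' + 1 + 1) = C ^ (m' + 1) from hA m']
  have e2' : ∀ Z : Matrix (Fin n) (Fin n) ℂ,
      P * (C ^ (m' + 1) * Z) = C ^ (m' + 1) * Z := by
    intro Z
    rw [← mul_assoc, hPC m']
  have eAC : ∀ Z : Matrix (Fin n) (Fin n) ℂ,
      A ^ (m' + 1) * (C ^ (m' + 1) * Z) = A * (C * Z) := by
    intro Z
    rw [← mul_assoc, hAC m', mul_assoc]
  have e0' : ∀ Z : Matrix (Fin n) (Fin n) ℂ,
      C * (A * (C * Z)) = C * Z := by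
    intro Z
    rw [← mul_assoc, ← mul_assoc, h0]
  set W : Matrix (Fin n) (Fin n) ℂ := C ^ (m' + 1 + 1) * A ^ (m' + 1) * P with hW
  -- W satisfies the 2nd equation
  have hAW : A * W = C ^ (m' + 1) * A ^ (m' + 1) * P := by
    rw [hW]
    simp only [mul_assoc]
    rw [e1]
  -- W satisfies the fixed-point equation
  have hWAW : W * A * W = W := by
    rw [hW]
    simp only [mul_assoc]
    rw [e1, e2', eAC, pow_succ C (m' + 1)]
    simp only [mul_assoc]
    rw [e0']
  intro X
  constructor
  · rintro ⟨hX1, hX2, hX3⟩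
    have hAXW : A * X = A * W := by rw [hX2, hAW]
    have hXAW : X * A = W * A := by rw [hX3, hW]
    calc X = X * A * X := hX1.symm
    _ = X * (A * X) := by rw [mul_assoc]
    _ = X * (A * W) := by rw [hAXW]
    _ = X * A * W := by rw [mul_assoc]
    _ = W * A * W := by rw [hXAW]
    _ = W := hWAW
  · rintro rfl
    refine ⟨hWAW, ?_, ?_⟩
    · rw [hAW]
    · rw [hW]
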